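/- Let f : ℝ^n → ℝ be bounded below and Lipschitz continuous with some constant L' > 0, let σ : [0,∞) → [0,∞) be a forcing function, and let M ∈ ℕ. Let {w^k} ⊂ ℝ^n and {R^k} ⊂ ℝ be sequences such that for every k: f(w^k) ≤ R^k ≤ max_{0 ≤ j ≤ min(k,M)} f(w^{k−j}) and f(w^{k+1}) ≤ R^k − σ(‖w^{k+1} − w^k‖). For each k let ℓ(k) be an integer with k − min(k,M) ≤ ℓ(k) ≤ k and f(w^{ℓ(k)}) = max_{0 ≤ j ≤ min(k,M)} f(w^{k−j}). Then, setting ℓ̂(k) = ℓ(k + M + 1), one has lim_{k→∞} ‖w^k − w^{ℓ̂(k)}‖ = 0. -/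

import Mathlib

open Filter Finset

/-- `refMax g M k = max_{0 ≤ j ≤ min(k,M)} g (k - j)`, the nonmonotone reference
maximum over the last `min(k,M)+1` values. -/
noncomputable def refMax (g : ℕ → ℝ) (M k : ℕ) : ℝ :=
  (Finset.range (min k M + 1)).sup' ⟨0, Finset.mem_range.mpr (Nat.succ_pos _)⟩ fun j => g (k - j)

/-- Lemma 1 from Grippo et al., part (iii).
If `f` is bounded below and Lipschitz, `σ` is a forcing function, the sequence
satisfies `f(w^k) ≤ R^k ≤ max_{0≤j≤min(k,M)} f(w^{k-j})` and
`f(w^{k+1}) ≤ R^k - σ(‖w^{k+1} - w^k‖)`, and for every `k`, `ℓ(k)` is an index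
in `{k - min(k,M), …, k}` attaining the reference maximum, then, with
`ℓ̂(k) = ℓ(k+M+1)`, we have `‖w^k - w^{ℓ̂(k)}‖ → 0`. -/
theorem stmt_14 {n : ℕ}
    (f : EuclideanSpace ℝ (Fin n) → ℝ)
    (hbdd : BddBelow (Set.range f))
    (L' : ℝ) (hL' : 0 < L')
    (hlip : ∀ u v : EuclideanSpace ℝ (Fin n), |f u - f v| ≤ L' * ‖u - v‖)
    (σ : ℝ → ℝ) (hσnonneg : ∀ t, 0 ≤ t → 0 ≤ σ t)
    (hσforcing : ∀ t : ℕ → ℝ, (∀ k, 0 ≤ t k) →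
      Tendsto (fun k => σ (t k)) atTop (nhds 0) → Tendsto t atTop (nhds 0))
    (M : ℕ)
    (w : ℕ → EuclideanSpace ℝ (Fin n)) (R : ℕ → ℝ)
    (hRlow : ∀ k, f (w k) ≤ R k)
    (hRhigh : ∀ k, R k ≤ refMax (fun k => f (w k)) M k)
    (hdecr : ∀ k, f (w (k + 1)) ≤ R k - σ ‖w (k + 1) - w k‖)
    (ℓ : ℕ → ℕ)
    (hℓlow : ∀ k, k - min k M ≤ ℓ k) (hℓhigh : ∀ k, ℓ k ≤ k)
    (hℓmax : ∀ k, f (w (ℓ k)) = refMax (fun k => f (w k)) M k) :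
    Tendsto (fun k => ‖w k - w (ℓ (k + M + 1))‖) atTop (nhds 0) := by
  set g : ℕ → ℝ := fun k => f (w k) with hg
  set m : ℕ → ℝ := fun k => refMax g M k with hm
  set d : ℕ → ℝ := fun i => ‖w (i + 1) - w i‖ with hd
  have hdnn : ∀ i, 0 ≤ d i := fun i => norm_nonneg _
  -- m is antitone
  have hmono : ∀ k, m (k + 1) ≤ m k := by
    intro k
    apply Finset.sup'_le
    intro j hj
    simp only [Finset.mem_range] at hj
    match j with
    | 0 =>
      have h1 : g (k + 1) ≤ R k := by
        have := hdecr k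
        have h0 := hσnonneg _ (norm_nonneg (w (k+1) - w k))
        simpa using this.trans (by linarith)
      refine h1.trans ((hRhigh k).trans_eq rfl)
    | j' + 1 =>
      have hj' : j' < min k M + 1 := by omega
      have : g (k + 1 - (j' + 1)) = g (k - j') := by congr 1; omega
      rw [this]
      exact Finset.le_sup' (fun j => g (k - j)) (Finset.mem_range.mpr hj')
  have hanti : Antitone m := antitone_nat_of_succ_le hmono
  -- m is bounded below
  obtain ⟨B, hB⟩ := hbdd
  have hmB : ∀ k, B ≤ m k := by
    intro k
    have h := hB ⟨w (ℓ k), rfl⟩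
    have h2 : g (ℓ k) = m k := hℓmax k
    rw [← h2]
    exact h
  have hmbdd : BddBelow (Set.range m) := ⟨B, by rintro x ⟨k, rfl⟩; exact hmB k⟩
  set F : ℝ := ⨅ k, m k with hF
  have hmF : Tendsto m atTop (nhds F) := tendsto_atTop_ciInf hanti hmbdd
  -- ℓ k - j → ∞
  have hℓtop : ∀ j : ℕ, Tendsto (fun k => ℓ k - j) atTop atTop := by
    intro j
    refine tendsto_atTop_mono (fun k => ?_) (tendsto_sub_atTop_nat (M + j))
    have := hℓlow k
    omega
  have hmcomp : ∀ j : ℕ, Tendsto (fun k => m (ℓ k - j)) atTop (nhds F) :=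
    fun j => hmF.comp (hℓtop j)
  -- main induction
  have key : ∀ j : ℕ, Tendsto (fun k => g (ℓ k - j)) atTop (nhds F) ∧
      Tendsto (fun k => d (ℓ k - (j + 1))) atTop (nhds 0) := by
    have step : ∀ j : ℕ, Tendsto (fun k => g (ℓ k - j)) atTop (nhds F) →
        Tendsto (fun k => d (ℓ k - (j + 1))) atTop (nhds 0) := by
      intro j hgj
      have hev : ∀ᶠ k in atTop, σ (d (ℓ k - (j + 1))) ≤ m (ℓ k - (j + 1)) - g (ℓ k - j) := by
        filter_upwards [eventually_ge_atTop (M + j + 1)] with k hk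
        have hℓk : j + 1 ≤ ℓ k := by have := hℓlow k; omega
        have heq : ℓ k - j = (ℓ k - (j + 1)) + 1 := by omega
        have h1 : g (ℓ k - j) ≤ R (ℓ k - (j + 1)) - σ (d (ℓ k - (j + 1))) := by
          rw [heq]; exact hdecr _
        have h2 : R (ℓ k - (j + 1)) ≤ m (ℓ k - (j + 1)) := hRhigh _
        linarith
      have hσ0 : Tendsto (fun k => σ (d (ℓ k - (j + 1)))) atTop (nhds 0) := by
        refine squeeze_zero' ?_ hev ?_
        · exact Eventually.of_forall fun k => hσnonneg _ (hdnn _)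
        · have := (hmcomp (j + 1)).sub hgj
          simpa using this
      exact hσforcing _ (fun k => hdnn _) hσ0
    intro j
    induction j with
    | zero =>
      have hg0 : Tendsto (fun k => g (ℓ k - 0)) atTop (nhds F) := by
        have heq : (fun k => g (ℓ k - 0)) = m :=
          funext fun k => by rw [Nat.sub_zero]; exact hℓmax k
        rw [heq]; exact hmF
      exact ⟨hg0, step 0 hg0⟩
    | succ j ih =>
      have hgj1 : Tendsto (fun k => g (ℓ k - (j + 1))) atTop (nhds F) := by
        have hdiff : Tendsto (fun k => g (ℓ k - (j + 1)) - g (ℓ k - j)) atTop (nhds 0) := by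
          refine squeeze_zero_norm' (a := fun k => L' * d (ℓ k - (j + 1))) ?_ ?_
          · filter_upwards [eventually_ge_atTop (M + j + 1)] with k hk
            have hℓk : j + 1 ≤ ℓ k := by have := hℓlow k; omega
            have heq : ℓ k - j = (ℓ k - (j + 1)) + 1 := by omega
            calc ‖g (ℓ k - (j + 1)) - g (ℓ k - j)‖
                = |f (w (ℓ k - (j + 1))) - f (w (ℓ k - j))| := rfl
              _ ≤ L' * ‖w (ℓ k - (j + 1)) - w (ℓ k - j)‖ := hlip _ _
              _ = L' * d (ℓ k - (j + 1)) := by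
                  rw [heq, hd]; simp [norm_sub_rev]
          · have := ih.2.const_mul L'
            simpa using this
        have := hdiff.add ih.1
        simpa using this
      exact ⟨hgj1, step (j + 1) hgj1⟩
  -- final bound
  have hsum : Tendsto (fun k => ∑ j ∈ Finset.range (M + 1),
      d (ℓ (k + M + 1) - (j + 1))) atTop (nhds 0) := by
    have : (0 : ℝ) = ∑ j ∈ Finset.range (M + 1), (0 : ℝ) := by simp
    rw [this]
    refine tendsto_finset_sum _ fun j _ => ?_
    have := (key j).2.comp (tendsto_add_atTop_nat (M + 1))
    simpa [Function.comp_def, Nat.add_assoc] using this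
  refine squeeze_zero' (Eventually.of_forall fun k => norm_nonneg _) ?_ hsum
  filter_upwards [eventually_ge_atTop M] with k hk
  set N := ℓ (k + M + 1) with hN
  have hN1 : k + 1 ≤ N := by have := hℓlow (k + M + 1); omega
  have hN2 : N ≤ k + M + 1 := hℓhigh (k + M + 1)
  have htel : w N - w k = ∑ i ∈ Finset.Ico k N, (w (i + 1) - w i) := by
    rw [Finset.sum_Ico_eq_sub _ (by omega : k ≤ N),
      Finset.sum_range_sub, Finset.sum_range_sub]
    abel
  have h1 : ‖w k - w N‖ ≤ ∑ i ∈ Finset.Ico k N, d i := by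
    rw [norm_sub_rev, htel]
    exact norm_sum_le _ _
  refine h1.trans ?_
  have hsub : Finset.Ico k N ⊆ (Finset.range (M + 1)).image fun j => N - (j + 1) := by
    intro i hi
    simp only [Finset.mem_Ico] at hi
    simp only [Finset.mem_image, Finset.mem_range]
    exact ⟨N - (i + 1), by omega, by omega⟩
  calc ∑ i ∈ Finset.Ico k N, d i
      ≤ ∑ i ∈ (Finset.range (M + 1)).image (fun j => N - (j + 1)), d i :=
        Finset.sum_le_sum_of_subset_of_nonneg hsub fun i _ _ => hdnn i
    _ = ∑ j ∈ Finset.range (M + 1), d (N - (j + 1)) := by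
        refine Finset.sum_image ?_
        intro a ha b hb hab
        simp only [Finset.mem_coe, Finset.mem_range] at ha hb hab
        omega
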